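/- Let G = (V, E) be a connected, locally finite simple graph on a countably infinite vertex set with maximum degree Δ < ∞, and let (T, 𝒯, π) be a probability space. Define ψ : (T^Δ)^V × [0,1]^V → T^E as follows: for an edge e = {u,v}, if z_u < z_v then ψ(y, z)_e := y_u^j with j = |{w adjacent to u : z_u ≤ z_w ≤ z_v}|, and if z_u ≥ z_v then ψ(y, z)_e := y_v^j with j = |{w adjacent to v : z_v ≤ z_w ≤ z_u}|. Then: (i) ψ is measurable and the pushforward under ψ of the product measure ⨂_{v∈V}(π^{⊗Δ} ⊗ λ), where λ is Lebesgue measure on [0,1], equals the product measure ⨂_{e∈E} π on T^E — i.e., the family (ψ(Y,Z)_e)_{e∈E} is i.i.d. with law π when Y = (Y_v^1,…,Y_v^Δ)_{v∈V} are i.i.d. with law π and Z = (Z_v)_{v∈V} are i.i.d. uniform on [0,1], all independent; (ii) for every graph automorphism γ of G (acting on coordinates), ψ(γ·y, γ·z)_{γ·e} = ψ(y,z)_e for all y, z, e; and (iii) ψ(y,z)_{{u,v}} depends only on the coordinates (y_w, z_w) with dist(w, u) ≤ 1 or dist(w, v) ≤ 1. -/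

import Mathlib

open MeasureTheory ProbabilityTheory

/-- The value assigned by the map `ψ` to the ordered pair `(u, v)`: if `z u < z v` then
`y_u^j` with `j = |{w ~ u : z u ≤ z w ≤ z v}|`, symmetrically if `z v < z u`, and a junk
value on the (Lebesgue-null, and irrelevant for edges once `z` is injective) tie
`z u = z v`.  Since for adjacent `u, v` one always has `1 ≤ j ≤ Δ`, the reduction
`Fin.ofNat` (i.e. `(j - 1) % Δ`) agrees with `j - 1` in every relevant case. -/
noncomputable def psiPair {V T : Type*} [Nonempty T] (G : SimpleGraph V) (Δ : ℕ)
    [NeZero Δ] (y : V → Fin Δ → T) (z : V → ℝ) (u v : V) : T :=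
  if z u < z v then
    y u (Fin.ofNat Δ (Nat.card {w : V | G.Adj u w ∧ z u ≤ z w ∧ z w ≤ z v} - 1))
  else if z v < z u then
    y v (Fin.ofNat Δ (Nat.card {w : V | G.Adj v w ∧ z v ≤ z w ∧ z w ≤ z u} - 1))
  else Classical.arbitrary T

theorem psiPair_symm {V T : Type*} [Nonempty T] (G : SimpleGraph V) (Δ : ℕ)
    [NeZero Δ] (y : V → Fin Δ → T) (z : V → ℝ) (u v : V) :
    psiPair G Δ y z u v = psiPair G Δ y z v u := by
  unfold psiPair
  rcases lt_trichotomy (z u) (z v) with h | h | h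
  · rw [if_pos h, if_neg (asymm h), if_pos h]
  · simp [h]
  · rw [if_neg (asymm h), if_pos h, if_pos h]

/-- The map `ψ : (T^Δ)^V × [0,1]^V → T^E`, defined on each edge `e = {u,v}` via
`psiPair` (which is symmetric in `(u,v)`). -/
noncomputable def psiMap {V T : Type*} [Nonempty T] (G : SimpleGraph V) (Δ : ℕ)
    [NeZero Δ] (y : V → Fin Δ → T) (z : V → ℝ) (e : G.edgeSet) : T :=
  Sym2.lift ⟨fun u v => psiPair G Δ y z u v, fun u v => psiPair_symm G Δ y z u v⟩ e.val


/-- Cylinder computation for a doubly-indexed product of probability measures. -/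
lemma aux_pi_cylinder {ι E T : Type*} [Fintype ι] [MeasurableSpace T] {Δ : ℕ}
    (ν : Measure T) [IsProbabilityMeasure ν] (g : E → ι × Fin Δ) (s : Finset E)
    (hg : ∀ x ∈ s, ∀ y ∈ s, g x = g y → x = y) (A : E → Set T)
    (hA : ∀ e ∈ s, MeasurableSet (A e)) :
    Measure.pi (fun _ : ι => Measure.pi (fun _ : Fin Δ => ν))
      {p : ι → Fin Δ → T | ∀ e ∈ s, p (g e).1 (g e).2 ∈ A e} = ∏ e ∈ s, ν (A e) := by
  classical
  set D : ι × Fin Δ → Set T := fun ik => ⋂ e ∈ s.filter (fun e => g e = ik), A e with hD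
  have hset : {p : ι → Fin Δ → T | ∀ e ∈ s, p (g e).1 (g e).2 ∈ A e}
      = Set.pi Set.univ (fun i => Set.pi Set.univ (fun k => D (i, k))) := by
    ext p
    simp only [Set.mem_setOf_eq, Set.mem_pi, Set.mem_univ, forall_true_left, hD,
      Set.mem_iInter, Finset.mem_filter]
    constructor
    · rintro h i k e ⟨he, hge⟩
      have := h e he
      rwa [hge] at this
    · intro h e he
      exact h (g e).1 (g e).2 e ⟨he, rfl⟩
  rw [hset, Measure.pi_pi]
  have key : ∀ i : ι, (Measure.pi fun _ : Fin Δ => ν) (Set.pi Set.univ fun k => D (i, k))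
      = ∏ k : Fin Δ, ν (D (i, k)) := fun i => Measure.pi_pi _ _
  simp_rw [key, ← Fintype.prod_prod_type (fun ik : ι × Fin Δ => ν (D ik))]
  have hsub : s.image g ⊆ Finset.univ := Finset.subset_univ _
  rw [← Finset.prod_subset hsub ?h1, Finset.prod_image hg]
  · refine Finset.prod_congr rfl fun e he => ?_
    have hfil : s.filter (fun e' => g e' = g e) = {e} := by
      ext e'
      simp only [Finset.mem_filter, Finset.mem_singleton]
      refine ⟨fun ⟨h1, h2⟩ => hg e' h1 e he h2, fun h => ?_⟩
      subst h; exact ⟨he, rfl⟩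
    have hDe : D (g e) = A e := by
      show (⋂ e' ∈ s.filter (fun e'' => g e'' = g e), A e') = A e
      rw [hfil]; simp
    rw [hDe]
  case h1 =>
    intro ik _ hik
    have hfil : s.filter (fun e' => g e' = ik) = ∅ := by
      rw [Finset.filter_eq_empty_iff]
      intro e he hge
      exact hik (Finset.mem_image.2 ⟨e, he, hge⟩)
    have hDe : D ik = Set.univ := by
      show (⋂ e' ∈ s.filter (fun e'' => g e'' = ik), A e') = Set.univ
      rw [hfil]; simp
    rw [hDe]; simp

lemma aux_eval_eq_null {ι : Type*} [Fintype ι] (μ : ι → Measure ℝ)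
    [∀ i, IsProbabilityMeasure (μ i)] (hatom : ∀ i (x : ℝ), μ i {x} = 0)
    {v w : ι} (hvw : v ≠ w) : Measure.pi μ {q | q v = q w} = 0 := by
  classical
  set p : ι → Prop := fun i => i = v with hp
  have hS : MeasurableSet {q : ι → ℝ | q v = q w} :=
    measurableSet_eq_fun (measurable_pi_apply v) (measurable_pi_apply w)
  set e := MeasurableEquiv.piEquivPiSubtypeProd (fun _ : ι => ℝ) p with he
  have mp := measurePreserving_piEquivPiSubtypeProd μ p
  have hC : MeasurableSet (e.symm ⁻¹' {q : ι → ℝ | q v = q w}) :=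
    e.symm.measurable hS
  have hpre : (⇑e ⁻¹' (⇑e.symm ⁻¹' {q : ι → ℝ | q v = q w})) = {q : ι → ℝ | q v = q w} := by
    ext q; simp
  have h1 := mp.measure_preimage hC.nullMeasurableSet
  rw [hpre] at h1
  rw [h1, Measure.prod_apply hC]
  have hwp : ¬ p w := hvw.symm
  have hinner : ∀ a : {x // p x} → ℝ,
      (Measure.pi fun i : {x // ¬ p x} => μ i)
        {b : {x // ¬ p x} → ℝ | e.symm (a, b) v = e.symm (a, b) w} = 0 := by
    intro a
    have hsub : {b : {x // ¬ p x} → ℝ | e.symm (a, b) v = e.symm (a, b) w}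
        ⊆ Function.eval (⟨w, hwp⟩ : {x // ¬ p x}) ⁻¹' {a ⟨v, rfl⟩} := by
      intro b hb
      simp only [Set.mem_setOf_eq] at hb
      have hv' : e.symm (a, b) v = a ⟨v, rfl⟩ := by
        show (Equiv.piEquivPiSubtypeProd p (fun _ : ι => ℝ)).symm (a, b) v = _
        rw [Equiv.piEquivPiSubtypeProd_symm_apply]
        simp [hp]
      have hw' : e.symm (a, b) w = b ⟨w, hwp⟩ := by
        show (Equiv.piEquivPiSubtypeProd p (fun _ : ι => ℝ)).symm (a, b) w = _
        rw [Equiv.piEquivPiSubtypeProd_symm_apply]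
        simp [hwp]
      simp only [Set.mem_preimage, Set.mem_singleton_iff, Function.eval]
      rw [← hv', ← hw', hb]
    exact measure_mono_null hsub (Measure.pi_eval_preimage_null _ (hatom w _))
  exact (lintegral_congr hinner).trans lintegral_zero

lemma aux_pi_not_inj_null {ι : Type*} [Fintype ι] (μ : ι → Measure ℝ)
    [∀ i, IsProbabilityMeasure (μ i)] (hatom : ∀ i (x : ℝ), μ i {x} = 0) :
    Measure.pi μ {q | ¬ Function.Injective q} = 0 := by
  have hsub : {q : ι → ℝ | ¬ Function.Injective q}
      ⊆ ⋃ (v : ι) (w : ι) (_ : v ≠ w), {q : ι → ℝ | q v = q w} := by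
    intro q hq
    simp only [Set.mem_setOf_eq, Function.Injective, not_forall] at hq
    obtain ⟨v, w, h1, h2⟩ := hq
    exact Set.mem_iUnion.2 ⟨v, Set.mem_iUnion.2 ⟨w, Set.mem_iUnion.2 ⟨h2, h1⟩⟩⟩
  refine measure_mono_null hsub (measure_iUnion_null fun v => measure_iUnion_null fun w =>
    measure_iUnion_null fun h => aux_eval_eq_null μ hatom h)

lemma aux_marginal {Ω V β : Type*} [MeasurableSpace Ω] [MeasurableSpace β]
    (P : Measure Ω) [IsProbabilityMeasure P] (W : V → Ω → β)
    (hmeas : ∀ v, Measurable (W v))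
    (hindep : iIndepFun W P)
    (μ0 : Measure β) [IsProbabilityMeasure μ0]
    (hlaw : ∀ v, Measure.map (W v) P = μ0) (t : Finset V) :
    Measure.map (fun ω => fun v : {x // x ∈ t} => W v ω) P
      = Measure.pi (fun _ : {x // x ∈ t} => μ0) := by
  classical
  have hWt : Measurable (fun ω => fun v : {x // x ∈ t} => W v ω) :=
    measurable_pi_lambda _ fun v => hmeas v
  refine (Measure.pi_eq fun s hs => ?_).symm
  set sets : V → Set β := fun v => if h : v ∈ t then s ⟨v, h⟩ else Set.univ with hsets
  have hsets_meas : ∀ v ∈ t, MeasurableSet (sets v) := by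
    intro v hv
    simp only [hsets, dif_pos hv]
    exact hs _
  have hpre : (fun ω => fun v : {x // x ∈ t} => W v ω) ⁻¹' (Set.univ.pi s)
      = ⋂ v ∈ t, W v ⁻¹' sets v := by
    ext ω
    simp only [Set.mem_preimage, Set.mem_pi, Set.mem_univ, forall_true_left, Set.mem_iInter]
    constructor
    · intro h v hv
      simp only [hsets, dif_pos hv, Set.mem_preimage]
      exact h ⟨v, hv⟩
    · intro h v
      have := h v.1 v.2
      simp only [hsets, dif_pos v.2, Set.mem_preimage, Subtype.coe_eta] at this
      exact this
  rw [Measure.map_apply hWt (MeasurableSet.univ_pi hs), hpre,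
    hindep.measure_inter_preimage_eq_mul t hsets_meas]
  have : ∀ v ∈ t, P (W v ⁻¹' sets v) = μ0 (sets v) := by
    intro v hv
    rw [← hlaw v, Measure.map_apply (hmeas v) (hsets_meas v hv)]
  rw [Finset.prod_congr rfl this, ← Finset.prod_attach t (fun v => μ0 (sets v)),
    Finset.univ_eq_attach]
  refine Finset.prod_congr rfl fun v _ => ?_
  congr 1
  simp only [hsets, dif_pos v.2, Subtype.coe_eta]
/-- The `Nat.card` in `psiPair` as a `Finset.card`. -/
lemma aux_card_eq {V : Type*} (G : SimpleGraph V) [G.LocallyFinite] (u : V)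
    (Q : V → Prop) [DecidablePred Q] :
    Nat.card {w : V | G.Adj u w ∧ Q w} = ((G.neighborFinset u).filter Q).card := by
  have h : {w : V | G.Adj u w ∧ Q w} = ((G.neighborFinset u).filter Q : Finset V) := by
    ext w
    simp [SimpleGraph.mem_neighborFinset]
  rw [h, Nat.card_coe_set_eq, Set.ncard_coe_finset]

lemma aux_count_measurable {V : Type*} [Countable V] (G : SimpleGraph V) [G.LocallyFinite]
    (u v : V) :
    Measurable (fun z : V → ℝ => Nat.card {w : V | G.Adj u w ∧ z u ≤ z w ∧ z w ≤ z v}) := by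
  classical
  have h : (fun z : V → ℝ => Nat.card {w : V | G.Adj u w ∧ z u ≤ z w ∧ z w ≤ z v})
      = fun z => ∑ w ∈ G.neighborFinset u, if z u ≤ z w ∧ z w ≤ z v then 1 else 0 := by
    funext z
    rw [aux_card_eq G u (fun w => z u ≤ z w ∧ z w ≤ z v), Finset.card_filter]
  rw [h]
  refine Finset.measurable_sum _ fun w _ => Measurable.ite ?_ measurable_const measurable_const
  exact (measurableSet_le (measurable_pi_apply u) (measurable_pi_apply w)).inter
    (measurableSet_le (measurable_pi_apply w) (measurable_pi_apply v))

lemma aux_psiPair_measurable {V T : Type*} [Countable V] [Nonempty T] [MeasurableSpace T]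
    (G : SimpleGraph V) [G.LocallyFinite] (Δ : ℕ) [NeZero Δ] (u v : V) :
    Measurable (fun p : (V → Fin Δ → T) × (V → ℝ) => psiPair G Δ p.1 p.2 u v) := by
  have heval : ∀ a : V, Measurable (fun p : ((V → Fin Δ → T) × (V → ℝ)) × Fin Δ =>
      p.1.1 a p.2) := by
    intro a
    refine measurable_from_prod_countable_left fun k => ?_
    exact (measurable_fst.eval (a := a)).eval (a := k)
  have hidx : ∀ a b : V, Measurable (fun p : (V → Fin Δ → T) × (V → ℝ) =>
      Fin.ofNat Δ (Nat.card {w : V | G.Adj a w ∧ p.2 a ≤ p.2 w ∧ p.2 w ≤ p.2 b} - 1)) := by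
    intro a b
    have : Measurable (fun n : ℕ => Fin.ofNat Δ (n - 1)) := measurable_from_top
    exact this.comp ((aux_count_measurable G a b).comp measurable_snd)
  have hbranch : ∀ a b : V, Measurable (fun p : (V → Fin Δ → T) × (V → ℝ) =>
      p.1 a (Fin.ofNat Δ (Nat.card {w : V | G.Adj a w ∧ p.2 a ≤ p.2 w ∧ p.2 w ≤ p.2 b} - 1))) := by
    intro a b
    exact (heval a).comp (measurable_id.prodMk (hidx a b))
  unfold psiPair
  refine Measurable.ite ?_ (hbranch u v) (Measurable.ite ?_ (hbranch v u) measurable_const)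
  · exact measurableSet_lt (measurable_snd.eval (a := u)) (measurable_snd.eval (a := v))
  · exact measurableSet_lt (measurable_snd.eval (a := v)) (measurable_snd.eval (a := u))

lemma aux_psiMap_mk {V T : Type*} [Nonempty T] (G : SimpleGraph V) (Δ : ℕ)
    [NeZero Δ] (y : V → Fin Δ → T) (z : V → ℝ) (e : G.edgeSet) (u v : V)
    (h : (e : Sym2 V) = s(u, v)) : psiMap G Δ y z e = psiPair G Δ y z u v := by
  rw [psiMap]
  have : e.val = s(u, v) := h
  rw [this, Sym2.lift_mk]

lemma aux_psiMap_measurable {V T : Type*} [Countable V] [Nonempty T] [MeasurableSpace T]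
    (G : SimpleGraph V) [G.LocallyFinite] (Δ : ℕ) [NeZero Δ] :
    Measurable (fun p : (V → Fin Δ → T) × (V → ℝ) => fun e : G.edgeSet => psiMap G Δ p.1 p.2 e) := by
  refine measurable_pi_lambda _ fun e => ?_
  obtain ⟨e, he⟩ := e
  induction e using Sym2.ind with
  | _ u v =>
    have : ∀ p : (V → Fin Δ → T) × (V → ℝ),
        psiMap G Δ p.1 p.2 ⟨s(u, v), he⟩ = psiPair G Δ p.1 p.2 u v :=
      fun p => aux_psiMap_mk G Δ p.1 p.2 _ u v rfl
    simp only [this]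
    exact aux_psiPair_measurable G Δ u v

/-- Locality of `psiPair`. -/
lemma aux_psiPair_local {V T : Type*} [Nonempty T] (G : SimpleGraph V) (Δ : ℕ) [NeZero Δ]
    (y y' : V → Fin Δ → T) (z z' : V → ℝ) (u v : V)
    (hyu : y' u = y u) (hyv : y' v = y v)
    (hz : ∀ w, w = u ∨ w = v ∨ G.Adj u w ∨ G.Adj v w → z' w = z w) :
    psiPair G Δ y' z' u v = psiPair G Δ y z u v := by
  have hzu : z' u = z u := hz u (Or.inl rfl)
  have hzv : z' v = z v := hz v (Or.inr (Or.inl rfl))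
  have hc1 : {w : V | G.Adj u w ∧ z' u ≤ z' w ∧ z' w ≤ z' v}
      = {w : V | G.Adj u w ∧ z u ≤ z w ∧ z w ≤ z v} := by
    ext w
    by_cases ha : G.Adj u w
    · simp [ha, hzu, hzv, hz w (Or.inr (Or.inr (Or.inl ha)))]
    · simp [ha]
  have hc2 : {w : V | G.Adj v w ∧ z' v ≤ z' w ∧ z' w ≤ z' u}
      = {w : V | G.Adj v w ∧ z v ≤ z w ∧ z w ≤ z u} := by
    ext w
    by_cases ha : G.Adj v w
    · simp [ha, hzu, hzv, hz w (Or.inr (Or.inr (Or.inr ha)))]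
    · simp [ha]
  rw [psiPair, psiPair, hc1, hc2, hzu, hzv, hyu, hyv]

lemma aux_count_lt {V : Type*} (G : SimpleGraph V) [G.LocallyFinite] {z : V → ℝ}
    {a b b' : V} (hab' : G.Adj a b') (h1 : z a ≤ z b) (h2 : z b < z b') :
    Nat.card {w : V | G.Adj a w ∧ z a ≤ z w ∧ z w ≤ z b}
      < Nat.card {w : V | G.Adj a w ∧ z a ≤ z w ∧ z w ≤ z b'} := by
  classical
  rw [aux_card_eq G a (fun w => z a ≤ z w ∧ z w ≤ z b),
    aux_card_eq G a (fun w => z a ≤ z w ∧ z w ≤ z b')]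
  refine Finset.card_lt_card ⟨Finset.monotone_filter_right _ ?_, fun hsub => ?_⟩
  · intro w _ hw
    exact ⟨hw.1, hw.2.trans h2.le⟩
  · have hb' : b' ∈ (G.neighborFinset a).filter (fun w => z a ≤ z w ∧ z w ≤ z b') := by
      simp [SimpleGraph.mem_neighborFinset, hab', le_of_lt (lt_of_le_of_lt h1 h2)]
    have := hsub hb'
    simp only [Finset.mem_filter] at this
    exact absurd this.2.2 (not_le.2 h2)

lemma aux_count_bounds {V : Type*} (G : SimpleGraph V) [G.LocallyFinite] {Δ : ℕ}
    (hdeg : ∀ v, G.degree v ≤ Δ) {z : V → ℝ} {a b : V} (hadj : G.Adj a b) (hle : z a ≤ z b) :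
    1 ≤ Nat.card {w : V | G.Adj a w ∧ z a ≤ z w ∧ z w ≤ z b}
      ∧ Nat.card {w : V | G.Adj a w ∧ z a ≤ z w ∧ z w ≤ z b} ≤ Δ := by
  classical
  rw [aux_card_eq G a (fun w => z a ≤ z w ∧ z w ≤ z b)]
  constructor
  · refine Finset.card_pos.2 ⟨b, ?_⟩
    simp [SimpleGraph.mem_neighborFinset, hadj, hle]
  · calc ((G.neighborFinset a).filter _).card ≤ (G.neighborFinset a).card :=
          Finset.card_filter_le _ _
      _ = G.degree a := rfl
      _ ≤ Δ := hdeg a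

lemma aux_idx_inj {Δ c c' : ℕ} [NeZero Δ] (h1 : 1 ≤ c) (h2 : c ≤ Δ) (h1' : 1 ≤ c')
    (h2' : c' ≤ Δ) (h : Fin.ofNat Δ (c - 1) = Fin.ofNat Δ (c' - 1)) : c = c' := by
  have := congrArg Fin.val h
  rw [Fin.val_ofNat, Fin.val_ofNat, Nat.mod_eq_of_lt (by omega), Nat.mod_eq_of_lt (by omega)] at this
  omega

lemma aux_equivariance {V T : Type*} [Nonempty T] (G : SimpleGraph V) (Δ : ℕ) [NeZero Δ]
    (γ : G ≃g G) (y : V → Fin Δ → T) (z : V → ℝ) (e : G.edgeSet) :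
    psiMap G Δ (fun v => y (γ.symm v)) (fun v => z (γ.symm v)) (γ.mapEdgeSet e) =
      psiMap G Δ y z e := by
  obtain ⟨e, he⟩ := e
  induction e using Sym2.ind with
  | _ u v =>
    rw [aux_psiMap_mk G Δ y z ⟨s(u,v), he⟩ u v rfl]
    have hval : ((γ.mapEdgeSet ⟨s(u,v), he⟩ : G.edgeSet) : Sym2 V) = s(γ u, γ v) := by
      simp [SimpleGraph.Iso.mapEdgeSet_apply, SimpleGraph.Hom.mapEdgeSet, Sym2.map_pair_eq]
    rw [aux_psiMap_mk G Δ _ _ _ (γ u) (γ v) hval]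
    set y' : V → Fin Δ → T := fun a => y (γ.symm a) with hy'
    set z' : V → ℝ := fun a => z (γ.symm a) with hz'
    have hzu : z' (γ u) = z u := by simp [hz']
    have hzv : z' (γ v) = z v := by simp [hz']
    have hyu : y' (γ u) = y u := by simp [hy']
    have hyv : y' (γ v) = y v := by simp [hy']
    have hcard1 : Nat.card {w : V | G.Adj (γ u) w ∧ z' (γ u) ≤ z' w ∧ z' w ≤ z' (γ v)}
        = Nat.card {w : V | G.Adj u w ∧ z u ≤ z w ∧ z w ≤ z v} := by
      refine (Nat.card_congr (Equiv.subtypeEquiv γ.toEquiv fun w => ?_)).symm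
      simp [γ.map_adj_iff, hz', hzu, hzv]
    have hcard2 : Nat.card {w : V | G.Adj (γ v) w ∧ z' (γ v) ≤ z' w ∧ z' w ≤ z' (γ u)}
        = Nat.card {w : V | G.Adj v w ∧ z v ≤ z w ∧ z w ≤ z u} := by
      refine (Nat.card_congr (Equiv.subtypeEquiv γ.toEquiv fun w => ?_)).symm
      simp [γ.map_adj_iff, hz', hzu, hzv]
    rw [psiPair, psiPair, hcard1, hcard2, hzu, hzv, hyu, hyv]

lemma aux_dist_le_one {V : Type*} {G : SimpleGraph V} {a b : V} (h : G.Adj a b) :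
    G.dist b a ≤ 1 := by
  refine le_trans (SimpleGraph.dist_le h.symm.toWalk) ?_
  simp [SimpleGraph.Adj.toWalk]

lemma aux_locality {V T : Type*} [Nonempty T] (G : SimpleGraph V) (Δ : ℕ) [NeZero Δ]
    (y y' : V → Fin Δ → T) (z z' : V → ℝ) (e : G.edgeSet) (u v : V)
    (he : (e : Sym2 V) = s(u, v))
    (hloc : ∀ w : V, (G.dist w u ≤ 1 ∨ G.dist w v ≤ 1) → y' w = y w ∧ z' w = z w) :
    psiMap G Δ y' z' e = psiMap G Δ y z e := by
  rw [aux_psiMap_mk G Δ y' z' e u v he, aux_psiMap_mk G Δ y z e u v he]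
  refine aux_psiPair_local G Δ y y' z z' u v ?_ ?_ ?_
  · exact (hloc u (Or.inl (by simp [SimpleGraph.dist_self]))).1
  · exact (hloc v (Or.inr (by simp [SimpleGraph.dist_self]))).1
  · intro w hw
    rcases hw with rfl | rfl | hadj | hadj
    · exact (hloc w (Or.inl (by simp [SimpleGraph.dist_self]))).2
    · exact (hloc w (Or.inr (by simp [SimpleGraph.dist_self]))).2
    · exact (hloc w (Or.inl (aux_dist_le_one hadj))).2
    · exact (hloc w (Or.inr (aux_dist_le_one hadj))).2

def auxN2 {V : Type*} [DecidableEq V] (G : SimpleGraph V) [G.LocallyFinite] : Sym2 V → Finset V :=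
  Sym2.lift ⟨fun a b => insert a (insert b (G.neighborFinset a ∪ G.neighborFinset b)),
    fun a b => by
      show insert a (insert b (G.neighborFinset a ∪ G.neighborFinset b))
        = insert b (insert a (G.neighborFinset b ∪ G.neighborFinset a))
      rw [Finset.union_comm, Finset.insert_comm]⟩

lemma aux_mem_N2 {V : Type*} [DecidableEq V] (G : SimpleGraph V) [G.LocallyFinite]
    (u v w : V) : w ∈ auxN2 G s(u, v) ↔ (w = u ∨ w = v ∨ G.Adj u w ∨ G.Adj v w) := by
  simp [auxN2, Sym2.lift_mk, SimpleGraph.mem_neighborFinset, Finset.mem_insert, Finset.mem_union]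

/-- The master finite-dimensional distribution computation. -/
lemma aux_master {V T : Type*} [Countable V] [Nonempty T] [MeasurableSpace T]
    (G : SimpleGraph V) [G.LocallyFinite] (Δ : ℕ) [NeZero Δ]
    (hdeg : ∀ v : V, G.degree v ≤ Δ)
    (π : Measure T) [IsProbabilityMeasure π]
    {Ω : Type*} [MeasurableSpace Ω] (P : Measure Ω) [IsProbabilityMeasure P]
    (Y : Ω → V → Fin Δ → T) (Z : Ω → V → ℝ)
    (hYZmeas : ∀ v : V, Measurable (fun ω => (Y ω v, Z ω v)))
    (hiid : iIndepFun (fun (v : V) (ω : Ω) => (Y ω v, Z ω v)) P)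
    (hlaw : ∀ v : V, Measure.map (fun ω => (Y ω v, Z ω v)) P =
      (Measure.pi fun _ : Fin Δ => π).prod (volume.restrict (Set.Icc (0 : ℝ) 1)))
    (s : Finset G.edgeSet) (A : G.edgeSet → Set T) (hA : ∀ e ∈ s, MeasurableSet (A e)) :
    P (⋂ e ∈ s, (fun ω => psiMap G Δ (Y ω) (Z ω) e) ⁻¹' A e) = ∏ e ∈ s, π (A e) := by
  classical
  set μ1 : Measure (Fin Δ → T) := Measure.pi fun _ : Fin Δ => π with hμ1
  set lam01 : Measure ℝ := volume.restrict (Set.Icc (0 : ℝ) 1) with hlam01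
  haveI : IsProbabilityMeasure lam01 := ⟨by simp [hlam01]⟩
  have hatom : ∀ x : ℝ, lam01 {x} = 0 := by
    intro x
    rw [hlam01, Measure.restrict_apply (measurableSet_singleton x)]
    exact measure_mono_null Set.inter_subset_left (measure_singleton x)
  set μ0 : Measure ((Fin Δ → T) × ℝ) := μ1.prod lam01 with hμ0
  have hrep : ∀ q : Sym2 V, ∃ u v : V, q = s(u, v) := fun q => q.ind fun u v => ⟨u, v, rfl⟩
  set t : Finset V := s.biUnion (fun e => auxN2 G (e : Sym2 V)) with ht
  have htmem : ∀ e : G.edgeSet, e ∈ s → ∀ u v : V, (e : Sym2 V) = s(u, v) →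
      ∀ w : V, (w = u ∨ w = v ∨ G.Adj u w ∨ G.Adj v w) → w ∈ t := by
    intro e he u v huv w hw
    refine Finset.mem_biUnion.2 ⟨e, he, ?_⟩
    rw [huv, aux_mem_N2]
    exact hw
  set W : V → Ω → (Fin Δ → T) × ℝ := fun v ω => (Y ω v, Z ω v) with hW
  set Wt : Ω → ({x // x ∈ t} → (Fin Δ → T) × ℝ) := fun ω v => W v ω with hWt
  have hWtmeas : Measurable Wt := measurable_pi_lambda _ fun v => hYZmeas v
  have hlawt : Measure.map Wt P = Measure.pi (fun _ : {x // x ∈ t} => μ0) := by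
    exact aux_marginal P W (fun v => hYZmeas v) hiid μ0 (fun v => hlaw v) t
  set exty : ({x // x ∈ t} → Fin Δ → T) → V → Fin Δ → T :=
    fun p v => if h : v ∈ t then p ⟨v, h⟩ else fun _ => Classical.arbitrary T with hexty
  set extz : ({x // x ∈ t} → ℝ) → V → ℝ :=
    fun q v => if h : v ∈ t then q ⟨v, h⟩ else 0 with hextz
  have hexty_meas : Measurable exty := by
    refine measurable_pi_lambda _ fun v => ?_
    by_cases h : v ∈ t
    · simp only [hexty, dif_pos h]
      exact measurable_pi_apply _
    · simp only [hexty, dif_neg h]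
      exact measurable_const
  have hextz_meas : Measurable extz := by
    refine measurable_pi_lambda _ fun v => ?_
    by_cases h : v ∈ t
    · simp only [hextz, dif_pos h]
      exact measurable_pi_apply _
    · simp only [hextz, dif_neg h]
      exact measurable_const
  set F : G.edgeSet → ({x // x ∈ t} → (Fin Δ → T) × ℝ) → T :=
    fun e x => psiMap G Δ (exty fun v => (x v).1) (extz fun v => (x v).2) e with hF
  have hFmeas : ∀ e : G.edgeSet, Measurable (F e) := by
    intro e
    have h1 : Measurable (fun x : {x // x ∈ t} → (Fin Δ → T) × ℝ =>
        ((exty fun v => (x v).1), (extz fun v => (x v).2))) := by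
      have hy1 : Measurable (fun x : {x // x ∈ t} → (Fin Δ → T) × ℝ => fun v => (x v).1) :=
        measurable_pi_lambda _ fun v => (measurable_pi_apply v).fst
      have hz1 : Measurable (fun x : {x // x ∈ t} → (Fin Δ → T) × ℝ => fun v => (x v).2) :=
        measurable_pi_lambda _ fun v => (measurable_pi_apply v).snd
      exact Measurable.prodMk (hexty_meas.comp hy1) (hextz_meas.comp hz1)
    exact ((aux_psiMap_measurable G Δ).eval (a := e)).comp h1
  have hFW : ∀ e : G.edgeSet, e ∈ s → ∀ ω : Ω, F e (Wt ω) = psiMap G Δ (Y ω) (Z ω) e := by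
    intro e he ω
    obtain ⟨u, v, huv⟩ := hrep (e : Sym2 V)
    have hstep : F e (Wt ω)
        = psiMap G Δ (exty fun v => (Wt ω v).1) (extz fun v => (Wt ω v).2) e := rfl
    rw [hstep, aux_psiMap_mk G Δ _ _ e u v huv, aux_psiMap_mk G Δ _ _ e u v huv]
    refine aux_psiPair_local G Δ (Y ω) _ (Z ω) _ u v ?_ ?_ ?_
    · have hu : u ∈ t := htmem e he u v huv u (Or.inl rfl)
      simp only [hexty, dif_pos hu, hWt, hW]
    · have hv : v ∈ t := htmem e he u v huv v (Or.inr (Or.inl rfl))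
      simp only [hexty, dif_pos hv, hWt, hW]
    · intro w hw
      have hwt : w ∈ t := htmem e he u v huv w hw
      simp only [hextz, dif_pos hwt, hWt, hW]
  set B : Set ({x // x ∈ t} → (Fin Δ → T) × ℝ) := {x | ∀ e ∈ s, F e x ∈ A e} with hB
  have hBmeas : MeasurableSet B := by
    have hBeq : B = ⋂ e ∈ (s : Set G.edgeSet), F e ⁻¹' A e := by
      ext x
      simp [hB, Set.mem_iInter]
    rw [hBeq]
    exact MeasurableSet.biInter s.countable_toSet fun e he => (hFmeas e) (hA e he)
  have hevent : (⋂ e ∈ s, (fun ω => psiMap G Δ (Y ω) (Z ω) e) ⁻¹' A e) = Wt ⁻¹' B := by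
    ext ω
    simp only [Set.mem_iInter, Set.mem_preimage, hB, Set.mem_setOf_eq]
    constructor
    · intro h e he
      rw [hFW e he ω]
      exact h e he
    · intro h e he
      rw [← hFW e he ω]
      exact h e he
  rw [hevent, ← Measure.map_apply hWtmeas hBmeas, hlawt]
  set σ := MeasurableEquiv.arrowProdEquivProdArrow (Fin Δ → T) ℝ {x // x ∈ t} with hσ
  have mp := measurePreserving_arrowProdEquivProdArrow (Fin Δ → T) ℝ {x // x ∈ t}
    (fun _ => μ1) (fun _ => lam01)
  have hBσ : MeasurableSet (⇑σ.symm ⁻¹' B) := σ.symm.measurable hBmeas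
  have hpre : (⇑σ ⁻¹' (⇑σ.symm ⁻¹' B)) = B := by ext x; simp
  have h1 := mp.measure_preimage hBσ.nullMeasurableSet
  rw [hpre] at h1
  rw [hμ0, h1, Measure.prod_apply_symm hBσ]
  have key : ∀ q : {x // x ∈ t} → ℝ, Function.Injective q →
      (Measure.pi fun _ : {x // x ∈ t} => μ1)
        ((fun p => (p, q)) ⁻¹' (⇑σ.symm ⁻¹' B)) = ∏ e ∈ s, π (A e) := by
    intro q hq
    set z : V → ℝ := extz q with hz
    have hsec : ∀ p : {x // x ∈ t} → Fin Δ → T,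
        ((p, q) ∈ (⇑σ.symm ⁻¹' B)) ↔ ∀ e ∈ s, psiMap G Δ (exty p) z e ∈ A e := by
      intro p
      constructor
      · intro h e he; exact h e he
      · intro h e he; exact h e he
    have Hsel : ∀ e : {x // x ∈ s}, ∃ ab : V × V,
        ((e : G.edgeSet) : Sym2 V) = s(ab.1, ab.2) ∧ G.Adj ab.1 ab.2 ∧
          z ab.1 < z ab.2 ∧ ab.1 ∈ t ∧ ab.2 ∈ t := by
      intro e
      obtain ⟨u, v, huv⟩ := hrep ((e : G.edgeSet) : Sym2 V)
      have hadj : G.Adj u v := by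
        rw [← SimpleGraph.mem_edgeSet, ← huv]
        exact (e : G.edgeSet).2
      have hu : u ∈ t := htmem e.1 e.2 u v huv u (Or.inl rfl)
      have hv : v ∈ t := htmem e.1 e.2 u v huv v (Or.inr (Or.inl rfl))
      have hne : z u ≠ z v := by
        intro hzz
        simp only [hz, hextz, dif_pos hu, dif_pos hv] at hzz
        exact hadj.ne (congrArg Subtype.val (hq hzz))
      rcases lt_or_gt_of_ne hne with hlt | hgt
      · exact ⟨(u, v), huv, hadj, hlt, hu, hv⟩
      · exact ⟨(v, u), by rw [huv, Sym2.eq_swap], hadj.symm, hgt, hv, hu⟩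
    choose ab hab1 hab2 hab3 hab4 hab5 using Hsel
    set c : {x // x ∈ s} → ℕ := fun e =>
      Nat.card {w : V | G.Adj (ab e).1 w ∧ z (ab e).1 ≤ z w ∧ z w ≤ z (ab e).2} with hc
    set g : {x // x ∈ s} → {x // x ∈ t} × Fin Δ :=
      fun e => (⟨(ab e).1, hab4 e⟩, Fin.ofNat Δ (c e - 1)) with hg
    have heval : ∀ (e : {x // x ∈ s}) (p : {x // x ∈ t} → Fin Δ → T),
        psiMap G Δ (exty p) z (e : G.edgeSet) = p (g e).1 (g e).2 := by
      intro e p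
      rw [aux_psiMap_mk G Δ _ _ _ _ _ (hab1 e), psiPair, if_pos (hab3 e)]
      simp only [hexty, dif_pos (hab4 e), hg, hz, hc]
    have hcb : ∀ e : {x // x ∈ s}, 1 ≤ c e ∧ c e ≤ Δ := fun e =>
      aux_count_bounds G hdeg (hab2 e) (hab3 e).le
    have hginj : ∀ x ∈ (Finset.univ : Finset {x // x ∈ s}), ∀ y ∈ Finset.univ,
        g x = g y → x = y := by
      intro e1 _ e2 _ hgeq
      by_contra hne
      have ha : (ab e1).1 = (ab e2).1 :=
        congrArg Subtype.val (congrArg Prod.fst hgeq)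
      have hk : Fin.ofNat Δ (c e1 - 1) = Fin.ofNat Δ (c e2 - 1) :=
        congrArg Prod.snd hgeq
      have hceq : c e1 = c e2 :=
        aux_idx_inj (hcb e1).1 (hcb e1).2 (hcb e2).1 (hcb e2).2 hk
      have hbne : (ab e1).2 ≠ (ab e2).2 := by
        intro hb
        apply hne
        have hvv : ((e1 : G.edgeSet) : Sym2 V) = ((e2 : G.edgeSet) : Sym2 V) := by
          rw [hab1 e1, hab1 e2, ha, hb]
        exact Subtype.ext (Subtype.ext hvv)
      have hzbne : z (ab e1).2 ≠ z (ab e2).2 := by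
        intro hzz
        simp only [hz, hextz, dif_pos (hab5 e1), dif_pos (hab5 e2)] at hzz
        exact hbne (congrArg Subtype.val (hq hzz))
      rcases lt_or_gt_of_ne hzbne with hlt | hgt
      · have hcc : c e1 < c e2 := by
          have := aux_count_lt G (z := z) (a := (ab e1).1) (b := (ab e1).2)
            (b' := (ab e2).2) (by rw [ha]; exact hab2 e2) (hab3 e1).le hlt
          simpa [hc, ha] using this
        omega
      · have hcc : c e2 < c e1 := by
          have := aux_count_lt G (z := z) (a := (ab e2).1) (b := (ab e2).2)
            (b' := (ab e1).2) (by rw [← ha]; exact hab2 e1) (hab3 e2).le hgt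
          simpa [hc, ha] using this
        omega
    have hsec2 : ((fun p => (p, q)) ⁻¹' (⇑σ.symm ⁻¹' B))
        = {p : {x // x ∈ t} → Fin Δ → T |
            ∀ e ∈ (Finset.univ : Finset {x // x ∈ s}),
              p (g e).1 (g e).2 ∈ (fun e' : {x // x ∈ s} => A e'.1) e} := by
      ext p
      constructor
      · intro h e' _
        rw [← heval e' p]
        exact (hsec p).1 h e'.1 e'.2
      · intro h
        refine (hsec p).2 fun e he => ?_
        have := h ⟨e, he⟩ (Finset.mem_univ _)
        rwa [← heval ⟨e, he⟩ p] at this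
    rw [hsec2, aux_pi_cylinder π g Finset.univ hginj _ (fun e _ => hA e.1 e.2)]
    exact Finset.prod_coe_sort s (fun e => π (A e))
  have hae : ∀ᵐ q ∂(Measure.pi fun _ : {x // x ∈ t} => lam01), Function.Injective q := by
    rw [ae_iff]
    exact aux_pi_not_inj_null _ (fun i x => hatom x)
  have hconst : ∫⁻ q, (Measure.pi fun _ : {x // x ∈ t} => μ1)
        ((fun p => (p, q)) ⁻¹' (⇑σ.symm ⁻¹' B)) ∂(Measure.pi fun _ : {x // x ∈ t} => lam01)
      = ∫⁻ _, (∏ e ∈ s, π (A e)) ∂(Measure.pi fun _ : {x // x ∈ t} => lam01) :=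
    lintegral_congr_ae (hae.mono fun q hq => key q hq)
  rw [hconst, lintegral_const, measure_univ, mul_one]

/-- Let `G` be a connected, locally finite simple graph on a countably
infinite vertex set with maximum degree `Δ < ∞`, and `(T, 𝒯, π)` a probability space.
Let `Y = (Y_v^1, …, Y_v^Δ)_{v ∈ V}` be i.i.d. with law `π^{⊗Δ}` per vertex and
`Z = (Z_v)_{v ∈ V}` i.i.d. uniform on `[0,1]`, all independent — i.e. the pairs
`ω ↦ (Y ω v, Z ω v)` are i.i.d. with law `π^{⊗Δ} ⊗ Leb_{[0,1]}`.  Then: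
(i) `ψ` is measurable and the family `(ψ(Y,Z)_e)_{e ∈ E}` is i.i.d. with law `π`;
(ii) `ψ` is equivariant under every automorphism `γ` of `G`; and
(iii) `ψ(y,z)_{{u,v}}` depends only on the coordinates `(y_w, z_w)` with
`dist(w,u) ≤ 1` or `dist(w,v) ≤ 1`. -/
theorem stmt9 {V T : Type*} [Countable V] [Infinite V] [Nonempty T]
    [MeasurableSpace T]
    (G : SimpleGraph V) (hconn : G.Connected) [G.LocallyFinite]
    (Δ : ℕ) [NeZero Δ] (hdeg : ∀ v : V, G.degree v ≤ Δ)
    (π : Measure T) [IsProbabilityMeasure π]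
    {Ω : Type*} [MeasurableSpace Ω] (P : Measure Ω) [IsProbabilityMeasure P]
    (Y : Ω → V → Fin Δ → T) (Z : Ω → V → ℝ)
    (hYZmeas : ∀ v : V, Measurable (fun ω => (Y ω v, Z ω v)))
    (hiid : iIndepFun (fun (v : V) (ω : Ω) => (Y ω v, Z ω v)) P)
    (hlaw : ∀ v : V, Measure.map (fun ω => (Y ω v, Z ω v)) P =
      (Measure.pi fun _ : Fin Δ => π).prod (volume.restrict (Set.Icc (0 : ℝ) 1))) :
    -- (i) measurability and the i.i.d. property of `(ψ(Y,Z)_e)_{e ∈ E}` with law `π`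
    (Measurable (fun p : (V → Fin Δ → T) × (V → ℝ) =>
        fun e : G.edgeSet => psiMap G Δ p.1 p.2 e) ∧
      iIndepFun
        (fun (e : G.edgeSet) (ω : Ω) => psiMap G Δ (Y ω) (Z ω) e) P ∧
      ∀ e : G.edgeSet, Measure.map (fun ω => psiMap G Δ (Y ω) (Z ω) e) P = π) ∧
    -- (ii) automorphism equivariance
    (∀ (γ : G ≃g G) (y : V → Fin Δ → T) (z : V → ℝ) (e : G.edgeSet),
      psiMap G Δ (fun v => y (γ.symm v)) (fun v => z (γ.symm v)) (γ.mapEdgeSet e) =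
        psiMap G Δ y z e) ∧
    -- (iii) locality: the value at an edge `{u,v}` depends only on coordinates within
    -- distance 1 of `u` or `v`
    (∀ (y y' : V → Fin Δ → T) (z z' : V → ℝ) (e : G.edgeSet) (u v : V),
      (e : Sym2 V) = s(u, v) →
      (∀ w : V, (G.dist w u ≤ 1 ∨ G.dist w v ≤ 1) → y' w = y w ∧ z' w = z w) →
      psiMap G Δ y' z' e = psiMap G Δ y z e) := by
  classical
  have hY : Measurable Y := measurable_pi_lambda _ fun v => measurable_fst.comp (hYZmeas v)
  have hZ : Measurable Z := measurable_pi_lambda _ fun v => measurable_snd.comp (hYZmeas v)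
  have hψ : ∀ e : G.edgeSet, Measurable (fun ω => psiMap G Δ (Y ω) (Z ω) e) := fun e =>
    ((aux_psiMap_measurable G Δ).eval (a := e)).comp (hY.prodMk hZ)
  have hsingle : ∀ (e : G.edgeSet) (A : Set T), MeasurableSet A →
      P ((fun ω => psiMap G Δ (Y ω) (Z ω) e) ⁻¹' A) = π A := by
    intro e A hAm
    have := aux_master G Δ hdeg π P Y Z hYZmeas hiid hlaw {e} (fun _ => A)
      (fun _ _ => hAm)
    simpa using this
  refine ⟨⟨aux_psiMap_measurable G Δ, ?_, ?_⟩, ?_, ?_⟩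
  · rw [iIndepFun_iff_measure_inter_preimage_eq_mul]
    intro S sets hsets
    rw [aux_master G Δ hdeg π P Y Z hYZmeas hiid hlaw S sets hsets]
    exact (Finset.prod_congr rfl fun e he => hsingle e (sets e) (hsets e he)).symm
  · intro e
    refine Measure.ext fun A hAm => ?_
    rw [Measure.map_apply (hψ e) hAm]
    exact hsingle e A hAm
  · exact fun γ y z e => aux_equivariance G Δ γ y z e
  · exact fun y y' z z' e u v he hloc => aux_locality G Δ y y' z z' e u v he hloc
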